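/- Let (X,d) be a metric space, E a complex Banach algebra, and f ∈ Lip_d(X,E) such that P(f) = 0 for some nonzero polynomial P in one variable (where P(f) is computed pointwise in E, interpreting z^k as f(x)^k). Fix x ∈ X and let D be a linear functional on Lip_d(X) which is a point derivation at x, i.e. D(gh) = g(x)D(h) + h(x)D(g) for all g, h ∈ Lip_d(X). Then D(φ∘f) = 0 for every character φ of E. -/

import Mathlib

open WeakDual

def MemLip {X E : Type*} [MetricSpace X] [NormedRing E] (f : X → E) : Prop :=
  (∃ K : NNReal, LipschitzWith K f) ∧ (∃ C : ℝ, ∀ x : X, ‖f x‖ ≤ C)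

section aux
variable {X : Type*} [MetricSpace X]

lemma memLip_const (c : ℂ) : MemLip (fun _ : X => c) :=
  ⟨⟨0, LipschitzWith.const c⟩, ⟨‖c‖, fun _ => le_rfl⟩⟩

lemma memLip_add {g h : X → ℂ} (hg : MemLip g) (hh : MemLip h) : MemLip (g + h) := by
  obtain ⟨⟨K1, h1⟩, ⟨C1, b1⟩⟩ := hg
  obtain ⟨⟨K2, h2⟩, ⟨C2, b2⟩⟩ := hh
  refine ⟨⟨K1 + K2, h1.add h2⟩, ⟨C1 + C2, fun y => ?_⟩⟩
  exact (norm_add_le _ _).trans (add_le_add (b1 y) (b2 y))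

lemma memLip_smul (c : ℂ) {g : X → ℂ} (hg : MemLip g) : MemLip (c • g) := by
  obtain ⟨⟨K, h1⟩, ⟨C, b1⟩⟩ := hg
  refine ⟨⟨‖c‖₊ * K, ?_⟩, ⟨‖c‖ * C, fun y => ?_⟩⟩
  · apply LipschitzWith.of_dist_le_mul
    intro a b
    have h2 : dist (c * g a) (c * g b) = ‖c‖ * dist (g a) (g b) := by
      simp [dist_eq_norm, ← mul_sub, norm_mul]
    have h3 : dist (g a) (g b) ≤ K * dist a b := h1.dist_le_mul a b
    calc dist ((c • g) a) ((c • g) b) = ‖c‖ * dist (g a) (g b) := h2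
      _ ≤ ‖c‖ * (K * dist a b) :=
          mul_le_mul_of_nonneg_left h3 (norm_nonneg c)
      _ = ↑(‖c‖₊ * K) * dist a b := by push_cast; ring
  · simp only [Pi.smul_apply, smul_eq_mul, norm_mul]
    exact mul_le_mul_of_nonneg_left (b1 y) (norm_nonneg c)

end aux

theorem pointDerivation_character_comp_eq_zero
    {X E : Type*} [MetricSpace X] [NormedRing E] [NormedAlgebra ℂ E] [CompleteSpace E]
    (f : X → E) (hf : MemLip f)
    (P : Polynomial ℂ) (hP : P ≠ 0) (hPf : ∀ y : X, Polynomial.aeval (f y) P = 0)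
    (x : X) (D : (X → ℂ) → ℂ)
    (hDadd : ∀ g h : X → ℂ, MemLip g → MemLip h → D (g + h) = D g + D h)
    (hDsmul : ∀ (c : ℂ) (g : X → ℂ), MemLip g → D (c • g) = c * D g)
    (hDder : ∀ g h : X → ℂ, MemLip g → MemLip h → D (g * h) = g x * D h + h x * D g)
    (φ : characterSpace ℂ E) :
    D (fun y : X => φ (f y)) = 0 := by
  obtain ⟨⟨K, hK⟩, ⟨C, hC⟩⟩ := hf
  set ψ : E →L[ℂ] ℂ := (φ : WeakDual ℂ E) with hψ
  set g : X → ℂ := fun y => φ (f y) with hg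
  have hgψ : ∀ y, g y = ψ (f y) := fun y => rfl
  -- g is bounded Lipschitz
  have hglip : LipschitzWith (‖ψ‖₊ * K) g := ψ.lipschitz.comp hK
  have hgmem : MemLip g := by
    refine ⟨⟨‖ψ‖₊ * K, hglip⟩, ⟨‖ψ‖ * C, fun y => ?_⟩⟩
    calc ‖g y‖ ≤ ‖ψ‖ * ‖f y‖ := ψ.le_opNorm (f y)
      _ ≤ ‖ψ‖ * C := mul_le_mul_of_nonneg_left (hC y) (norm_nonneg ψ)
  -- every value of g is a root of P
  have hroot : ∀ y, g y ∈ P.roots.toFinset := by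
    intro y
    have : Polynomial.aeval (φ (f y)) P = 0 := by
      rw [Polynomial.aeval_algHom_apply φ (f y) P, hPf y, map_zero]
    rw [Multiset.mem_toFinset, Polynomial.mem_roots hP]
    simpa [Polynomial.IsRoot, Polynomial.aeval_def, Polynomial.eval₂_eq_eval_map] using this
  set c : ℂ := g x with hc
  set T : Finset ℂ := P.roots.toFinset.erase c with hT
  have hcT : c ∉ (T : Set ℂ) := by simp [hT]
  have hTclosed : IsClosed (T : Set ℂ) := T.finite_toSet.isClosed
  obtain ⟨ε, hε, hball⟩ := Metric.isOpen_iff.mp hTclosed.isOpen_compl c hcT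
  set δ : ℝ := ε / (K * ‖ψ‖ + 1) with hδ
  have hden : (0:ℝ) < K * ‖ψ‖ + 1 := by positivity
  have hδpos : 0 < δ := div_pos hε hden
  -- g is constant = c on the ball of radius δ
  have hconst : ∀ y : X, dist y x < δ → g y = c := by
    intro y hy
    by_contra hne
    have hmem : g y ∈ (T : Set ℂ) := by
      simp only [hT, Finset.coe_erase, Set.mem_diff, Set.mem_singleton_iff]
      exact ⟨by simpa using hroot y, hne⟩
    have hd : dist (g y) c < ε := by
      have h1 : dist (g y) c ≤ ↑(‖ψ‖₊ * K) * dist y x := hglip.dist_le_mul y x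
      have h2 : (↑(‖ψ‖₊ * K) : ℝ) * dist y x < (K * ‖ψ‖ + 1) * δ := by
        apply lt_of_le_of_lt (b := (K * ‖ψ‖ + 1) * dist y x)
        · apply mul_le_mul_of_nonneg_right _ dist_nonneg
          push_cast
          nlinarith [norm_nonneg ψ, NNReal.coe_nonneg K, dist_nonneg (x := y) (y := x)]
        · exact mul_lt_mul_of_pos_left hy hden
      have h3 : (K * ‖ψ‖ + 1) * δ = ε := by
        rw [hδ]
        field_simp [hden.ne']
      exact lt_of_le_of_lt h1 (h3 ▸ h2)
    exact hball (Metric.mem_ball.mpr hd) hmem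
  -- h := g - c
  set h : X → ℂ := g + (-c) • (fun _ => (1:ℂ)) with hh
  have hhmem : MemLip h := memLip_add hgmem (memLip_smul _ (memLip_const 1))
  have hhx : h x = 0 := by simp [hh, hc]
  have hhzero : ∀ y : X, dist y x < δ → h y = 0 := by
    intro y hy
    simp [hh, hconst y hy]
  -- the cutoff k
  set k : X → ℂ := fun y => ((min 1 (dist y x / δ) : ℝ) : ℂ) with hk
  have hkmem : MemLip k := by
    constructor
    · refine ⟨⟨δ⁻¹, inv_nonneg.mpr hδpos.le⟩, LipschitzWith.of_dist_le_mul fun a b => ?_⟩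
      have e1 : dist (k a) (k b) = |min 1 (dist a x / δ) - min 1 (dist b x / δ)| := by
        simp [hk, Complex.dist_eq, ← Complex.ofReal_sub, Complex.norm_real, Real.norm_eq_abs]
      have e2 : |min 1 (dist a x / δ) - min 1 (dist b x / δ)| ≤
          |dist a x / δ - dist b x / δ| := by
        have := abs_min_sub_min_le_max (1:ℝ) (dist a x / δ) 1 (dist b x / δ)
        simpa using this
      have e3 : |dist a x / δ - dist b x / δ| ≤ dist a b / δ := by
        rw [div_sub_div_same, abs_div, abs_of_pos hδpos]
        exact div_le_div_of_nonneg_right (abs_dist_sub_le a b x) hδpos.le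
      rw [e1]
      refine e2.trans (e3.trans ?_)
      rw [div_eq_mul_inv, mul_comm]
      exact le_rfl
    · refine ⟨1, fun y => ?_⟩
      simp only [hk, Complex.norm_real, Real.norm_eq_abs]
      rw [abs_le]
      constructor
      · have : (0:ℝ) ≤ min 1 (dist y x / δ) :=
          le_min zero_le_one (div_nonneg dist_nonneg hδpos.le)
        linarith
      · exact min_le_left _ _
  have hkx : k x = 0 := by simp [hk, hδpos.ne']
  have hkh : k * h = h := by
    funext y
    by_cases hy : dist y x < δ
    · simp [hhzero y hy]
    · have : k y = 1 := by
        simp only [hk]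
        norm_cast
        exact min_eq_left ((one_le_div hδpos).mpr (not_lt.mp hy))
      simp [this]
  have hDh : D h = 0 := by
    have := hDder k h hkmem hhmem
    rw [hkh, hkx, hhx] at this
    simpa using this
  have hD1 : D (fun _ : X => (1:ℂ)) = 0 := by
    have h0 := hDder _ _ (memLip_const (X := X) 1) (memLip_const (X := X) 1)
    have h11 : (fun _ : X => (1:ℂ)) * (fun _ : X => (1:ℂ)) = (fun _ : X => (1:ℂ)) := by
      funext y; simp
    rw [h11] at h0
    simp only [one_mul] at h0
    linear_combination -h0
  have hgeq : g = h + c • (fun _ : X => (1:ℂ)) := by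
    funext y
    simp only [hh, Pi.add_apply, Pi.smul_apply, smul_eq_mul]
    ring
  show D g = 0
  rw [hgeq, hDadd h _ hhmem (memLip_smul _ (memLip_const 1)),
      hDsmul _ _ (memLip_const 1), hDh, hD1]
  ring
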